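/- If G is a connected graph of diameter 2 and H is any graph, then χ_ρ(G∘H) = |V(G)|·|V(H)| − α(G)·α(H) + 1. -/

import Mathlib

open SimpleGraph

/-- The lexicographic product of simple graphs. -/
def SimpleGraph.lexProd {α β : Type*} (G : SimpleGraph α) (H : SimpleGraph β) :
    SimpleGraph (α × β) where
  Adj x y := G.Adj x.1 y.1 ∨ (x.1 = y.1 ∧ H.Adj x.2 y.2)
  symm := ⟨by
    rintro ⟨g1, h1⟩ ⟨g2, h2⟩ (h | ⟨rfl, h⟩)
    · exact Or.inl h.symm
    · exact Or.inr ⟨rfl, h.symm⟩⟩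
  loopless := ⟨by
    rintro ⟨g, h⟩ (h' | ⟨-, h'⟩)
    · exact G.loopless.irrefl g h'
    · exact H.loopless.irrefl h h'⟩

/-- A set of vertices is independent if its vertices are pairwise non-adjacent. -/
def SimpleGraph.IndepSet {α : Type*} (G : SimpleGraph α) (s : Set α) : Prop :=
  ∀ u ∈ s, ∀ v ∈ s, u ≠ v → ¬ G.Adj u v

/-- The independence number: the largest cardinality of an independent set. -/
noncomputable def SimpleGraph.indepNumFin {α : Type*} [Fintype α] (G : SimpleGraph α) : ℕ :=
  sSup {n | ∃ s : Finset α, G.IndepSet ↑s ∧ s.card = n}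

/-- An `i`-packing: a set of vertices pairwise at distance greater than `i`. -/
def SimpleGraph.IsPacking {α : Type*} (G : SimpleGraph α) (i : ℕ) (s : Set α) : Prop :=
  ∀ u ∈ s, ∀ v ∈ s, u ≠ v → i < G.dist u v

/-- The `i`-packing number: the largest cardinality of an `i`-packing. -/
noncomputable def SimpleGraph.packingNum {α : Type*} [Fintype α] (G : SimpleGraph α)
    (i : ℕ) : ℕ :=
  sSup {n | ∃ s : Finset α, G.IsPacking i ↑s ∧ s.card = n}

/-- A `k`-packing coloring: colors in `{1, …, k}`, and any two distinct vertices sharing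
color `i` are at distance greater than `i`. -/
def SimpleGraph.IsPackingColoring {α : Type*} (G : SimpleGraph α) (k : ℕ) (c : α → ℕ) :
    Prop :=
  (∀ v, c v ∈ Finset.Icc 1 k) ∧ ∀ u v, u ≠ v → c u = c v → c u < G.dist u v

/-- The packing chromatic number: the least `k` admitting a `k`-packing coloring. -/
noncomputable def SimpleGraph.packingChromatic {α : Type*} (G : SimpleGraph α) : ℕ :=
  sInf {k | ∃ c : α → ℕ, G.IsPackingColoring k c}

/-- `d(G) = 1` if `G` is complete, and `diam(G) - 1` otherwise. -/
noncomputable def SimpleGraph.dval {α : Type*} [Fintype α] (G : SimpleGraph α) : ℕ :=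
  letI := Classical.dec (G = (⊤ : SimpleGraph α))
  if G = (⊤ : SimpleGraph α) then 1 else G.diam - 1

lemma indep_bddAbove {γ : Type*} [Fintype γ] (K : SimpleGraph γ) :
    BddAbove {n | ∃ s : Finset γ, K.IndepSet ↑s ∧ s.card = n} := by
  refine ⟨Fintype.card γ, ?_⟩
  rintro n ⟨s, -, rfl⟩
  exact s.card_le_univ

lemma exists_indep_card_eq {γ : Type*} [Fintype γ] (K : SimpleGraph γ) :
    ∃ s : Finset γ, K.IndepSet ↑s ∧ s.card = K.indepNumFin := by
  have h0 : (0 : ℕ) ∈ {n | ∃ s : Finset γ, K.IndepSet ↑s ∧ s.card = n} :=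
    ⟨∅, by intro u hu; simp at hu, by simp⟩
  exact Nat.sSup_mem ⟨0, h0⟩ (indep_bddAbove K)

lemma card_le_indepNum {γ : Type*} [Fintype γ] {K : SimpleGraph γ} {s : Finset γ}
    (h : K.IndepSet ↑s) : s.card ≤ K.indepNumFin :=
  le_csSup (indep_bddAbove K) ⟨s, h, rfl⟩

lemma lex_indepNum {α β : Type*} [Fintype α] [Fintype β]
    (G : SimpleGraph α) (H : SimpleGraph β) :
    (G.lexProd H).indepNumFin = G.indepNumFin * H.indepNumFin := by
  classical
  apply le_antisymm
  · -- upper bound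
    obtain ⟨U, hU, hUcard⟩ := exists_indep_card_eq (G.lexProd H)
    rw [← hUcard]
    set P : Finset α := U.image Prod.fst with hP
    have hPindep : G.IndepSet ↑P := by
      intro a ha a' ha' hne hadj
      simp only [hP, Finset.coe_image, Set.mem_image, Finset.mem_coe] at ha ha'
      obtain ⟨p, hp, rfl⟩ := ha
      obtain ⟨q, hq, rfl⟩ := ha'
      exact hU p hp q hq (fun h => hne (by rw [h])) (Or.inl hadj)
    have hfib : ∀ a ∈ P, (U.filter (fun p => p.1 = a)).card ≤ H.indepNumFin := by
      intro a _
      have hinj : Set.InjOn Prod.snd (↑(U.filter (fun p => p.1 = a)) : Set (α × β)) := by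
        intro p hp q hq h2
        simp only [Finset.coe_filter, Set.mem_setOf_eq] at hp hq
        exact Prod.ext (hp.2.trans hq.2.symm) h2
      rw [← Finset.card_image_of_injOn hinj]
      apply card_le_indepNum
      intro b hb b' hb' hne hadj
      simp only [Finset.coe_image, Set.mem_image, Finset.mem_coe,
        Finset.mem_filter] at hb hb'
      obtain ⟨p, ⟨hpU, hpa⟩, rfl⟩ := hb
      obtain ⟨q, ⟨hqU, hqa⟩, rfl⟩ := hb'
      refine hU p hpU q hqU (fun h => hne (by rw [h])) (Or.inr ⟨hpa.trans hqa.symm, hadj⟩)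
    calc U.card = ∑ a ∈ P, (U.filter (fun p => p.1 = a)).card :=
          Finset.card_eq_sum_card_image Prod.fst U
      _ ≤ ∑ _a ∈ P, H.indepNumFin := Finset.sum_le_sum hfib
      _ = P.card * H.indepNumFin := by rw [Finset.sum_const, smul_eq_mul]
      _ ≤ G.indepNumFin * H.indepNumFin := by
          exact Nat.mul_le_mul_right _ (card_le_indepNum hPindep)
  · obtain ⟨S, hS, hScard⟩ := exists_indep_card_eq G
    obtain ⟨T, hT, hTcard⟩ := exists_indep_card_eq H
    rw [← hScard, ← hTcard, ← Finset.card_product]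
    apply card_le_indepNum
    rintro ⟨a, b⟩ hab ⟨a', b'⟩ hab' hne hadj
    simp only [Finset.coe_product, Set.mem_prod, Finset.mem_coe] at hab hab'
    rcases hadj with h | ⟨rfl, h⟩
    · exact hS a hab.1 a' hab'.1 h.ne h
    · exact hT b hab.2 b' hab'.2 (fun hb => hne (by rw [hb])) h

lemma lex_dist_bounds {α β : Type*} [Fintype α] [Fintype β] [Nonempty β]
    (G : SimpleGraph α) (H : SimpleGraph β) (hG : G.Connected) (hd : G.diam = 2)
    {u v : α × β} (huv : u ≠ v) :
    0 < (G.lexProd H).dist u v ∧ (G.lexProd H).dist u v ≤ 2 := by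
  classical
  have hnt : Nontrivial α := G.nontrivial_of_diam_ne_zero (by rw [hd]; omega)
  have hetop : G.ediam ≠ ⊤ := G.ediam_ne_top_of_diam_ne_zero (by rw [hd]; omega)
  have hneigh : ∀ g : α, ∃ g', G.Adj g g' := by
    intro g
    obtain ⟨g', hne⟩ := exists_ne g
    obtain ⟨w⟩ := hG g g'
    cases w with
    | nil => exact absurd rfl hne.symm
    | cons h _ => exact ⟨_, h⟩
  obtain ⟨g1, h1⟩ := u
  obtain ⟨g2, h2⟩ := v
  suffices hw : ∃ w : (G.lexProd H).Walk (g1, h1) (g2, h2), w.length ≤ 2 by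
    obtain ⟨w, hw⟩ := hw
    exact ⟨Reachable.pos_dist_of_ne ⟨w⟩ huv, le_trans (SimpleGraph.dist_le w) hw⟩
  by_cases hg : g1 = g2
  · subst hg
    have hh : h1 ≠ h2 := fun h => huv (by rw [h])
    by_cases hadj : H.Adj h1 h2
    · exact ⟨Walk.cons (u := (g1, h1)) (v := (g1, h2)) (Or.inr ⟨rfl, hadj⟩) Walk.nil, Nat.le_succ _⟩
    · obtain ⟨g', hgg'⟩ := hneigh g1
      exact ⟨Walk.cons (u := (g1, h1)) (v := (g', h1)) (Or.inl hgg')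
        (Walk.cons (Or.inl hgg'.symm) Walk.nil), Nat.le_refl _⟩
  · by_cases hadj : G.Adj g1 g2
    · exact ⟨Walk.cons (Or.inl hadj) Walk.nil, Nat.le_succ _⟩
    · have hdle : G.dist g1 g2 ≤ 2 := hd ▸ dist_le_diam hetop
      have hdpos : 0 < G.dist g1 g2 := hG.pos_dist_of_ne hg
      have hdne1 : G.dist g1 g2 ≠ 1 := fun h => hadj (dist_eq_one_iff_adj.mp h)
      have hdeq : G.dist g1 g2 = 2 := by omega
      obtain ⟨p, hp⟩ := hG.exists_walk_length_eq_dist g1 g2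
      rw [hdeq] at hp
      cases p with
      | nil => simp at hp
      | cons ha q =>
        cases q with
        | nil => simp at hp
        | cons hb r =>
          have hr : r.length = 0 := by
            simp only [Walk.length_cons] at hp; omega
          have := Walk.eq_of_length_eq_zero hr
          subst this
          exact ⟨Walk.cons (v := (_, h1)) (Or.inl ha)
            (Walk.cons (Or.inl hb) Walk.nil), Nat.le_refl _⟩

theorem packingChromatic_lexProd_diam_two {α β : Type*} [Fintype α] [Fintype β]
    [Nonempty β] (G : SimpleGraph α) (H : SimpleGraph β)
    (hG : G.Connected) (hd : G.diam = 2) :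
    (G.lexProd H).packingChromatic
      = Fintype.card α * Fintype.card β - G.indepNumFin * H.indepNumFin + 1 := by
  classical
  set X := G.lexProd H with hX
  set N := Fintype.card (α × β) with hN
  set A := X.indepNumFin with hA
  obtain ⟨U, hU, hUcard⟩ := exists_indep_card_eq X
  have hAN : A ≤ N := by rw [hA, ← hUcard, hN]; exact U.card_le_univ
  -- construct the coloring
  have hcompl : Uᶜ.card = N - A := by rw [Finset.card_compl, hUcard]
  have hmem : (N - A + 1) ∈ {k | ∃ c : α × β → ℕ, X.IsPackingColoring k c} := by
    set e := Uᶜ.equivFin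
    refine ⟨fun v => if hv : v ∈ U then 1 else
      (e ⟨v, Finset.mem_compl.mpr hv⟩ : ℕ) + 2, ?_, ?_⟩
    · intro v
      by_cases hv : v ∈ U <;> simp only [hv, dif_pos, dif_neg, not_false_iff,
        Finset.mem_Icc]
      · omega
      · have := (e ⟨v, Finset.mem_compl.mpr hv⟩).isLt
        omega
    · intro u v huv hc
      obtain ⟨hpos, hle⟩ := lex_dist_bounds G H hG hd huv
      rw [← hX] at hpos hle
      by_cases hu : u ∈ U <;> by_cases hv : v ∈ U <;>
        simp only [hu, hv, dif_pos, dif_neg, not_false_iff] at hc ⊢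
      · have hnadj : ¬ X.Adj u v := hU u hu v hv huv
        have : X.dist u v ≠ 1 := fun h => hnadj (dist_eq_one_iff_adj.mp h)
        omega
      · omega
      · omega
      · exfalso
        have : e ⟨u, Finset.mem_compl.mpr hu⟩ = e ⟨v, Finset.mem_compl.mpr hv⟩ :=
          Fin.ext (by omega)
        have := e.injective this
        exact huv (congrArg Subtype.val this)
  have hlow : ∀ k ∈ {k | ∃ c : α × β → ℕ, X.IsPackingColoring k c},
      N - A + 1 ≤ k := by
    rintro k ⟨c, hc1, hc2⟩
    have hnex : Nonempty (α × β) := by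
      have : Nontrivial α := G.nontrivial_of_diam_ne_zero (by rw [hd]; omega)
      infer_instance
    have hk1 : 1 ≤ k := by
      obtain ⟨x⟩ := hnex
      have := hc1 x
      rw [Finset.mem_Icc] at this
      omega
    set S1 := Finset.univ.filter (fun v => c v = 1) with hS1
    have hS1indep : X.IndepSet ↑S1 := by
      intro u hu v hv huv hadj
      simp only [hS1, Finset.coe_filter, Set.mem_setOf_eq] at hu hv
      have := hc2 u v huv (hu.2.trans hv.2.symm)
      rw [hu.2, dist_eq_one_iff_adj.mpr hadj] at this
      omega
    have hS1card : S1.card ≤ A := card_le_indepNum hS1indep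
    have hinj : Set.InjOn c (↑S1ᶜ : Set (α × β)) := by
      intro u hu v hv hcc
      by_contra hne
      have hlt := hc2 u v hne hcc
      have hle := (lex_dist_bounds G H hG hd hne).2
      rw [← hX] at hle
      simp only [Finset.coe_compl, Set.mem_compl_iff, Finset.mem_coe, hS1,
        Finset.mem_filter, Finset.mem_univ, true_and] at hu hv
      have h1 := hc1 u
      rw [Finset.mem_Icc] at h1
      omega
    have hmaps : ∀ v ∈ S1ᶜ, c v ∈ Finset.Icc 2 k := by
      intro v hv
      simp only [hS1, Finset.mem_compl, Finset.mem_filter, Finset.mem_univ,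
        true_and] at hv
      have := hc1 v
      rw [Finset.mem_Icc] at this ⊢
      omega
    have hcard : S1ᶜ.card ≤ k - 1 := by
      have := Finset.card_le_card_of_injOn c hmaps hinj
      rwa [Nat.card_Icc] at this
    have hcc : S1ᶜ.card = N - S1.card := by rw [Finset.card_compl]
    omega
  have : X.packingChromatic = N - A + 1 :=
    le_antisymm (Nat.sInf_le hmem) (le_csInf ⟨_, hmem⟩ hlow)
  rw [this, hN, Fintype.card_prod, hA, lex_indepNum]
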